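/- If for every real k > 1 + (u−1)/v (with u, v > 0 reals) the inequality |π − p/q| < 1/q^k has only finitely many coprime positive integer solutions — equivalently the irrationality measure of π is strictly less than 1 + (u−1)/v — then ∑_{n=1}^∞ 1/(n^u · |sin n|^v) converges. -/

import Mathlib

open Real Finset

lemma aux_fin_min {α : Type*} (S : Set α) (hS : S.Finite) (f : α → ℝ)
    (hf : ∀ x ∈ S, 0 < f x) : ∃ c > 0, ∀ x ∈ S, c ≤ f x := by
  rcases S.eq_empty_or_nonempty with h | h
  · exact ⟨1, one_pos, by simp [h]⟩
  · have hne : hS.toFinset.Nonempty := by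
      rwa [Set.Finite.toFinset_nonempty]
    refine ⟨hS.toFinset.inf' hne f, ?_, ?_⟩
    · rw [gt_iff_lt, Finset.lt_inf'_iff]
      intro x hx
      exact hf x (hS.mem_toFinset.mp hx)
    · intro x hx
      exact Finset.inf'_le f (hS.mem_toFinset.mpr hx)

lemma aux_sin (x : ℝ) (p : ℤ) (h : |x - p * π| ≤ π / 2) :
    2 / π * |x - p * π| ≤ |Real.sin x| := by
  have hx : Real.sin x = (-1 : ℝ) ^ p * Real.sin (x - p * π) := by
    have := Real.sin_add_int_mul_pi (x - p * π) p
    rw [sub_add_cancel] at this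
    exact this
  have habs : |Real.sin x| = |Real.sin (x - p * π)| := by
    have h1 : |(-1 : ℝ) ^ p| = 1 := by
      rcases Int.even_or_odd p with he | ho
      · rw [he.neg_one_zpow]; simp
      · rw [ho.neg_one_zpow]; simp
    rw [hx, abs_mul, h1, one_mul]
  rw [habs]
  set d := x - p * π with hd
  have h1 : 2 / π * |d| ≤ Real.sin |d| :=
    Real.mul_le_sin (abs_nonneg d) h
  have h2 : Real.sin |d| ≤ |Real.sin d| := by
    rcases le_or_gt 0 d with hd0 | hd0
    · rw [abs_of_nonneg hd0]; exact le_abs_self _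
    · rw [abs_of_neg hd0, Real.sin_neg]; exact neg_le_abs _
  linarith

lemma aux_sum_distinct (g : ℕ → ℝ) (hg0 : ∀ j, 0 ≤ g j) (hga : ∀ i j, i ≤ j → g j ≤ g i) :
    ∀ (n : ℕ) (t : Finset ℕ), t.card = n → ∑ j ∈ t, g j ≤ ∑ j ∈ Finset.range n, g j := by
  intro n
  induction n with
  | zero => intro t ht; simp [Finset.card_eq_zero.mp ht]
  | succ n ih =>
    intro t ht
    have hne : t.Nonempty := Finset.card_pos.mp (by omega)
    set M := t.max' hne with hMdef
    have hMt : M ∈ t := t.max'_mem hne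
    have hcard : (t.erase M).card = n := by
      rw [Finset.card_erase_of_mem hMt, ht]
      omega
    have hMn : n ≤ M := by
      have hsub : t ⊆ Finset.range (M + 1) := by
        intro x hx
        rw [Finset.mem_range]
        exact Nat.lt_succ_of_le (t.le_max' x hx)
      have := Finset.card_le_card hsub
      rw [ht, Finset.card_range] at this
      omega
    calc ∑ j ∈ t, g j = g M + ∑ j ∈ t.erase M, g j := (Finset.add_sum_erase _ _ hMt).symm
      _ ≤ g n + ∑ j ∈ Finset.range n, g j := add_le_add (hga n M hMn) (ih _ hcard)
      _ = ∑ j ∈ Finset.range (n + 1), g j := by rw [Finset.sum_range_succ]; ring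

lemma aux_rpow_sum (σ : ℝ) (h0 : 0 < σ) (h1 : σ ≤ 1) :
    ∀ B : ℕ, ∑ j ∈ Finset.range B, ((j : ℝ) + 1) ^ (σ - 1) ≤ (B : ℝ) ^ σ / σ := by
  intro B
  induction B with
  | zero => simp [Real.zero_rpow (ne_of_gt h0)]
  | succ n ih =>
    rw [Finset.sum_range_succ]
    have hn1 : (0:ℝ) < (n : ℝ) + 1 := by positivity
    have hx0 : (0:ℝ) ≤ (n : ℝ) / ((n : ℝ) + 1) := by positivity
    have hgm := Real.geom_mean_le_arith_mean2_weighted h0.le (by linarith : (0:ℝ) ≤ 1 - σ)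
      hx0 zero_le_one (by ring)
    -- hgm : (n/(n+1))^σ * 1^(1-σ) ≤ σ * (n/(n+1)) + (1-σ) * 1
    rw [Real.one_rpow, mul_one, mul_one] at hgm
    have hmul : ((n : ℝ) / ((n : ℝ) + 1)) ^ σ * ((n : ℝ) + 1) ^ σ = (n : ℝ) ^ σ := by
      rw [← Real.mul_rpow hx0 hn1.le, div_mul_cancel₀]
      exact ne_of_gt hn1
    have hpow : ((n : ℝ) + 1) ^ σ = ((n : ℝ) + 1) ^ (σ - 1) * ((n : ℝ) + 1) := by
      rw [← Real.rpow_add_one (ne_of_gt hn1) (σ - 1)]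
      ring_nf
    have hkey : σ * ((n : ℝ) + 1) ^ (σ - 1) ≤ ((n : ℝ) + 1) ^ σ - (n : ℝ) ^ σ := by
      have h2 : (n : ℝ) ^ σ ≤ (σ * ((n : ℝ) / ((n : ℝ) + 1)) + (1 - σ)) * ((n : ℝ) + 1) ^ σ := by
        rw [← hmul]
        apply mul_le_mul_of_nonneg_right hgm (Real.rpow_nonneg hn1.le σ)
      have h3 : (σ * ((n : ℝ) / ((n : ℝ) + 1)) + (1 - σ)) * ((n : ℝ) + 1) ^ σ
          = σ * (n : ℝ) * ((n : ℝ) + 1) ^ (σ - 1) + (1 - σ) * ((n : ℝ) + 1) ^ σ := by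
        rw [hpow]; field_simp
      rw [h3] at h2
      nlinarith [h2, hpow]
    have hdiv : ((n : ℝ) + 1) ^ (σ - 1) ≤ (((n : ℝ) + 1) ^ σ - (n : ℝ) ^ σ) / σ := by
      rw [le_div_iff₀ h0]
      linarith
    have hcast : ((n + 1 : ℕ) : ℝ) = (n : ℝ) + 1 := by push_cast; ring
    rw [hcast]
    have hsplit : (((n : ℝ) + 1) ^ σ - (n : ℝ) ^ σ) / σ = ((n : ℝ) + 1) ^ σ / σ - (n : ℝ) ^ σ / σ := by
      ring
    linarith


noncomputable def dd (p : ℕ) : ℝ := (p : ℝ) * π - (round ((p : ℝ) * π) : ℝ)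

lemma aux_block (u v k c σ : ℝ) (hu0 : 0 ≤ u) (hv : 0 < v) (hk1 : 1 < k) (hc0 : 0 < c)
    (hσ0 : 0 < σ) (hσ1 : σ ≤ 1) (hσv : 1 - v ≤ σ)
    (hδ : ∀ p : ℕ, 1 ≤ p → ∀ m : ℤ, c * (p : ℝ) ^ (1 - k) ≤ |(p : ℝ) * π - (m : ℝ)|) :
    ∃ E : ℝ, 0 ≤ E ∧ ∀ i : ℕ,
      ∑ p ∈ Finset.Ico ((2 : ℕ) ^ i) (2 ^ (i + 1)), (p : ℝ) ^ (-u) * |dd p| ^ (-v)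
        ≤ E * (2 : ℝ) ^ ((i : ℝ) * (σ + (k - 1) * v - u)) := by
  have h2 : (0:ℝ) < 2 := by norm_num
  refine ⟨2 * (1 + 1 / σ) * (c / 2) ^ (-v) * (2 : ℝ) ^ ((k - 1) * v), by positivity, ?_⟩
  intro i
  set blk := Finset.Ico ((2 : ℕ) ^ i) (2 ^ (i + 1)) with hblk
  have hcard : blk.card = 2 ^ i := by
    rw [hblk, Nat.card_Ico]
    have : (2 : ℕ) ^ (i + 1) = 2 ^ i * 2 := pow_succ 2 i
    omega
  set X : ℝ := (2 : ℝ) ^ ((i : ℝ) + 1) with hX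
  have hX1 : (1 : ℝ) ≤ X := by
    rw [hX]; apply Real.one_le_rpow (by norm_num) (by positivity)
  have hX0 : (0 : ℝ) < X := lt_of_lt_of_le one_pos hX1
  have hXcast : ((2 ^ (i + 1) : ℕ) : ℝ) = X := by
    rw [hX, show ((i:ℝ) + 1) = ((i + 1 : ℕ) : ℝ) by push_cast; ring, Real.rpow_natCast]
    push_cast; ring
  set Y : ℝ := (2 : ℝ) ^ ((i : ℝ)) with hY
  have hY1 : (1 : ℝ) ≤ Y := by
    rw [hY]; apply Real.one_le_rpow (by norm_num) (by positivity)
  have hY0 : (0 : ℝ) < Y := lt_of_lt_of_le one_pos hY1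
  have hYcast : ((2 ^ i : ℕ) : ℝ) = Y := by
    rw [hY, Real.rpow_natCast]; push_cast; ring
  set θ : ℝ := c / 2 * X ^ (1 - k) with hθdef
  have hθ : 0 < θ := by rw [hθdef]; positivity
  have hlow : ∀ p : ℕ, 1 ≤ p → p ≤ 2 ^ (i + 1) → ∀ m : ℤ,
      2 * θ ≤ |(p : ℝ) * π - (m : ℝ)| := by
    intro p hp1 hp2 m
    refine le_trans ?_ (hδ p hp1 m)
    have h1 : X ^ (1 - k) ≤ (p : ℝ) ^ (1 - k) := by
      apply Real.rpow_le_rpow_of_nonpos (by exact_mod_cast hp1) ?_ (by linarith)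
      rw [← hXcast]
      exact_mod_cast hp2
    calc 2 * θ = c * X ^ (1 - k) := by rw [hθdef]; ring
      _ ≤ c * (p : ℝ) ^ (1 - k) := mul_le_mul_of_nonneg_left h1 hc0.le
  have hblkmem : ∀ p ∈ blk, 1 ≤ p ∧ p ≤ 2 ^ (i + 1) := by
    intro p hp
    rw [hblk, Finset.mem_Ico] at hp
    exact ⟨le_trans Nat.one_le_two_pow hp.1, hp.2.le⟩
  have hdd2 : ∀ p ∈ blk, 2 * θ ≤ |dd p| := by
    intro p hp
    obtain ⟨h1, h2'⟩ := hblkmem p hp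
    exact hlow p h1 h2' (round ((p : ℝ) * π))
  have hsep : ∀ p ∈ blk, ∀ q ∈ blk, p ≠ q → 2 * θ ≤ |dd p - dd q| := by
    have key : ∀ p q : ℕ, q < p → p ≤ 2 ^ (i + 1) → 2 * θ ≤ |dd p - dd q| := by
      intro p q hqp hp2
      have hr1 : 1 ≤ p - q := by omega
      have hr2 : p - q ≤ 2 ^ (i + 1) := by omega
      have h := hlow (p - q) hr1 hr2 (round ((p : ℝ) * π) - round ((q : ℝ) * π))
      have heq : ((p - q : ℕ) : ℝ) * π - ((round ((p : ℝ) * π) - round ((q : ℝ) * π) : ℤ) : ℝ)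
          = dd p - dd q := by
        rw [Nat.cast_sub hqp.le]
        push_cast
        simp only [dd]
        ring
      rwa [heq] at h
    intro p hp q hq hpq
    rcases lt_or_gt_of_ne hpq with h | h
    · rw [abs_sub_comm]
      exact key q p h (hblkmem q hq).2
    · exact key p q h (hblkmem p hp).2
  set m : ℕ → ℕ := fun p => ⌊|dd p| / θ⌋₊ with hmdef
  have hm : ∀ p ∈ blk, θ * ((max 1 (m p) : ℕ) : ℝ) ≤ |dd p| := by
    intro p hp
    rcases Nat.eq_zero_or_pos (m p) with h0 | h0
    · have hmax : (max 1 (m p) : ℕ) = 1 := by rw [h0]; simp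
      rw [hmax]
      have := hdd2 p hp
      simp only [Nat.cast_one, mul_one]
      linarith
    · have hmax : (max 1 (m p) : ℕ) = m p := max_eq_right h0
      rw [hmax]
      have hfl : ((m p : ℕ) : ℝ) ≤ |dd p| / θ := Nat.floor_le (by positivity)
      calc θ * ((m p : ℕ) : ℝ) ≤ θ * (|dd p| / θ) := mul_le_mul_of_nonneg_left hfl hθ.le
        _ = |dd p| := by field_simp
  have hflbound : ∀ p ∈ blk, ∀ q ∈ blk, m p = m q → |(|dd p| - |dd q|)| < θ := by
    intro p hp q hq hmeq
    have e1 : |dd p| < (((m p : ℕ) : ℝ) + 1) * θ := by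
      rw [← div_lt_iff₀ hθ]; exact Nat.lt_floor_add_one _
    have e2 : ((m p : ℕ) : ℝ) * θ ≤ |dd p| := by
      rw [← le_div_iff₀ hθ]; exact Nat.floor_le (by positivity)
    have e3 : |dd q| < (((m q : ℕ) : ℝ) + 1) * θ := by
      rw [← div_lt_iff₀ hθ]; exact Nat.lt_floor_add_one _
    have e4 : ((m q : ℕ) : ℝ) * θ ≤ |dd q| := by
      rw [← le_div_iff₀ hθ]; exact Nat.floor_le (by positivity)
    rw [hmeq] at e1 e2
    rw [abs_lt]
    constructor <;> nlinarith
  have hinjgen : ∀ p ∈ blk, ∀ q ∈ blk, m p = m q → ((0 ≤ dd p) ↔ (0 ≤ dd q)) → p = q := by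
    intro p hp q hq hmeq hiff
    by_contra hne
    have hsep' := hsep p hp q hq hne
    have hfl := hflbound p hp q hq hmeq
    rcases le_or_gt 0 (dd p) with h | h
    · have h' := hiff.mp h
      rw [abs_of_nonneg h, abs_of_nonneg h'] at hfl
      linarith
    · have h' : dd q < 0 := by
        by_contra hc
        push_neg at hc
        exact h.not_ge (hiff.mpr hc)
      rw [abs_of_neg h, abs_of_neg h'] at hfl
      have heq : -dd p - -dd q = -(dd p - dd q) := by ring
      rw [heq, abs_neg] at hfl
      linarith
  -- the antitone weight function
  set g : ℕ → ℝ := fun j => ((max 1 j : ℕ) : ℝ) ^ (-v) with hgdef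
  have hg0 : ∀ j, 0 ≤ g j := fun j => Real.rpow_nonneg (by positivity) _
  have hga : ∀ a b : ℕ, a ≤ b → g b ≤ g a := by
    intro a b hab
    apply Real.rpow_le_rpow_of_nonpos
    · have : (0:ℕ) < max 1 a := lt_of_lt_of_le one_pos (le_max_left 1 a)
      exact_mod_cast this
    · exact_mod_cast max_le_max le_rfl hab
    · linarith
  have hgsum : ∀ M : ℕ, ∑ j ∈ Finset.range M, g j ≤ 1 + (M : ℝ) ^ σ / σ := by
    intro M
    cases M with
    | zero =>
      simp only [Finset.range_zero, Finset.sum_empty, Nat.cast_zero]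
      rw [Real.zero_rpow (ne_of_gt hσ0)]
      norm_num
    | succ n =>
      rw [Finset.sum_range_succ']
      have hg0' : g 0 = 1 := by
        simp only [hgdef]
        norm_num
      have hgj : ∀ j : ℕ, g (j + 1) ≤ ((j : ℝ) + 1) ^ (σ - 1) := by
        intro j
        have hmax : (max 1 (j + 1) : ℕ) = j + 1 := max_eq_right (Nat.succ_le_succ (Nat.zero_le j))
        simp only [hgdef, hmax]
        have hbase : (1 : ℝ) ≤ ((j + 1 : ℕ) : ℝ) := by exact_mod_cast Nat.succ_le_succ (Nat.zero_le j)
        have h := Real.rpow_le_rpow_of_exponent_le hbase (show -v ≤ σ - 1 by linarith)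
        calc (((j + 1 : ℕ)) : ℝ) ^ (-v) ≤ (((j + 1 : ℕ)) : ℝ) ^ (σ - 1) := h
          _ = ((j : ℝ) + 1) ^ (σ - 1) := by push_cast; ring_nf
      have hs1 : ∑ j ∈ Finset.range n, g (j + 1) ≤ ∑ j ∈ Finset.range n, ((j : ℝ) + 1) ^ (σ - 1) :=
        Finset.sum_le_sum (fun j _ => hgj j)
      have hs2 := aux_rpow_sum σ hσ0 hσ1 n
      have hs3 : (n : ℝ) ^ σ ≤ ((n + 1 : ℕ) : ℝ) ^ σ := by
        apply Real.rpow_le_rpow (Nat.cast_nonneg n) (by push_cast; linarith) hσ0.le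
      have hs4 : (n : ℝ) ^ σ / σ ≤ ((n + 1 : ℕ) : ℝ) ^ σ / σ := by gcongr
      rw [hg0']
      linarith
  -- pointwise bound
  have hstep1 : ∀ p ∈ blk, (p : ℝ) ^ (-u) * |dd p| ^ (-v) ≤ Y ^ (-u) * (θ ^ (-v) * g (m p)) := by
    intro p hp
    have hpY : Y ≤ (p : ℝ) := by
      have hple : (2:ℕ) ^ i ≤ p := (Finset.mem_Ico.mp (by rwa [hblk] at hp)).1
      rw [← hYcast]
      exact_mod_cast hple
    have h1 : (p : ℝ) ^ (-u) ≤ Y ^ (-u) :=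
      Real.rpow_le_rpow_of_nonpos hY0 hpY (by linarith)
    have hdp := hm p hp
    have hposmax : (0:ℝ) < ((max 1 (m p) : ℕ) : ℝ) := by
      have : (0:ℕ) < max 1 (m p) := lt_of_lt_of_le one_pos (le_max_left _ _)
      exact_mod_cast this
    have h2' : |dd p| ^ (-v) ≤ (θ * ((max 1 (m p) : ℕ) : ℝ)) ^ (-v) :=
      Real.rpow_le_rpow_of_nonpos (by positivity) hdp (by linarith)
    have h2 : |dd p| ^ (-v) ≤ θ ^ (-v) * g (m p) := by
      rwa [Real.mul_rpow hθ.le hposmax.le] at h2'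
    apply mul_le_mul h1 h2 (Real.rpow_nonneg (abs_nonneg _) _) (Real.rpow_nonneg hY0.le _)
  have hchain : ∑ p ∈ blk, (p : ℝ) ^ (-u) * |dd p| ^ (-v)
      ≤ Y ^ (-u) * θ ^ (-v) * (∑ p ∈ blk, g (m p)) := by
    calc ∑ p ∈ blk, (p : ℝ) ^ (-u) * |dd p| ^ (-v)
        ≤ ∑ p ∈ blk, Y ^ (-u) * (θ ^ (-v) * g (m p)) := Finset.sum_le_sum hstep1
      _ = Y ^ (-u) * θ ^ (-v) * (∑ p ∈ blk, g (m p)) := by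
          rw [← Finset.mul_sum, ← Finset.mul_sum, mul_assoc]
  -- split by sign and bound each part
  have hpart : ∀ (s : Finset ℕ), s ⊆ blk → (∀ p ∈ s, ∀ q ∈ s, m p = m q → p = q) →
      ∑ p ∈ s, g (m p) ≤ 1 + Y ^ σ / σ := by
    intro s hs hinj
    have himg : ∑ p ∈ s, g (m p) = ∑ j ∈ s.image m, g j := (Finset.sum_image hinj).symm
    have hcard2 : (s.image m).card = s.card := Finset.card_image_of_injOn hinj
    have hle : ∑ j ∈ s.image m, g j ≤ ∑ j ∈ Finset.range ((s.image m).card), g j :=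
      aux_sum_distinct g hg0 hga _ _ rfl
    have hsub : ∑ j ∈ Finset.range ((s.image m).card), g j ≤ ∑ j ∈ Finset.range (2 ^ i), g j := by
      apply Finset.sum_le_sum_of_subset_of_nonneg
      · apply Finset.range_subset_range.mpr
        rw [hcard2]
        calc s.card ≤ blk.card := Finset.card_le_card hs
          _ = 2 ^ i := hcard
      · intro j _ _; exact hg0 j
    have := hgsum (2 ^ i)
    rw [hYcast] at this
    calc ∑ p ∈ s, g (m p) = ∑ j ∈ s.image m, g j := himg
      _ ≤ _ := hle.trans (hsub.trans this)
  have hsplit : ∑ p ∈ blk, g (m p)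
      = ∑ p ∈ blk.filter (fun p => 0 ≤ dd p), g (m p)
        + ∑ p ∈ blk.filter (fun p => ¬ 0 ≤ dd p), g (m p) :=
    (Finset.sum_filter_add_sum_filter_not blk _ _).symm
  have hP := hpart (blk.filter (fun p => 0 ≤ dd p)) (Finset.filter_subset _ _) (by
    intro p hp q hq hmeq
    rw [Finset.mem_filter] at hp hq
    exact hinjgen p hp.1 q hq.1 hmeq (by constructor <;> intro <;> [exact hq.2; exact hp.2]))
  have hQ := hpart (blk.filter (fun p => ¬ 0 ≤ dd p)) (Finset.filter_subset _ _) (by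
    intro p hp q hq hmeq
    rw [Finset.mem_filter] at hp hq
    exact hinjgen p hp.1 q hq.1 hmeq (by constructor <;> intro h <;> [exact absurd h hp.2; exact absurd h hq.2]))
  have hsum2 : ∑ p ∈ blk, g (m p) ≤ 2 * (1 + Y ^ σ / σ) := by
    rw [hsplit]; linarith
  have h1Y : (1:ℝ) ≤ Y ^ σ := Real.one_le_rpow hY1 hσ0.le
  have hinner : 2 * (1 + Y ^ σ / σ) ≤ 2 * (1 + 1 / σ) * Y ^ σ := by
    have heq : 2 * (1 + 1 / σ) * Y ^ σ = 2 * Y ^ σ + 2 * (Y ^ σ / σ) := by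
      field_simp
    rw [heq]
    have : Y ^ σ / σ ≤ Y ^ σ / σ := le_refl _
    nlinarith
  have htotal : ∑ p ∈ blk, (p : ℝ) ^ (-u) * |dd p| ^ (-v)
      ≤ Y ^ (-u) * θ ^ (-v) * (2 * (1 + 1 / σ) * Y ^ σ) := by
    calc ∑ p ∈ blk, (p : ℝ) ^ (-u) * |dd p| ^ (-v)
        ≤ Y ^ (-u) * θ ^ (-v) * (∑ p ∈ blk, g (m p)) := hchain
      _ ≤ Y ^ (-u) * θ ^ (-v) * (2 * (1 + 1 / σ) * Y ^ σ) := by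
          apply mul_le_mul_of_nonneg_left (hsum2.trans hinner) (by positivity)
  -- final exponent bookkeeping
  have collect : ∀ a b : ℝ, (2:ℝ) ^ a * (2:ℝ) ^ b = (2:ℝ) ^ (a + b) :=
    fun a b => (Real.rpow_add h2 a b).symm
  have hfin : Y ^ (-u) * θ ^ (-v) * (2 * (1 + 1 / σ) * Y ^ σ)
      = (2 * (1 + 1 / σ) * (c / 2) ^ (-v) * (2:ℝ) ^ ((k - 1) * v))
        * (2:ℝ) ^ ((i : ℝ) * (σ + (k - 1) * v - u)) := by
    have hθv : θ ^ (-v) = (c / 2) ^ (-v) * (2:ℝ) ^ (((i:ℝ) + 1) * ((1 - k) * (-v))) := by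
      rw [hθdef, Real.mul_rpow (by positivity) (Real.rpow_nonneg hX0.le _), hX,
        ← Real.rpow_mul h2.le, ← Real.rpow_mul h2.le]
      ring_nf
    rw [hθv, hY, ← Real.rpow_mul h2.le, ← Real.rpow_mul h2.le]
    calc (2:ℝ) ^ ((i:ℝ) * -u) * ((c / 2) ^ (-v) * (2:ℝ) ^ (((i:ℝ) + 1) * ((1 - k) * (-v))))
        * (2 * (1 + 1 / σ) * (2:ℝ) ^ ((i:ℝ) * σ))
        = (2 * (1 + 1 / σ) * (c / 2) ^ (-v))
          * ((2:ℝ) ^ ((i:ℝ) * -u) * (2:ℝ) ^ (((i:ℝ) + 1) * ((1 - k) * (-v))) * (2:ℝ) ^ ((i:ℝ) * σ)) := by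
          ring
      _ = (2 * (1 + 1 / σ) * (c / 2) ^ (-v))
          * (2:ℝ) ^ ((i:ℝ) * -u + ((i:ℝ) + 1) * ((1 - k) * (-v)) + (i:ℝ) * σ) := by
          rw [collect, collect]
      _ = (2 * (1 + 1 / σ) * (c / 2) ^ (-v))
          * (2:ℝ) ^ ((k - 1) * v + (i : ℝ) * (σ + (k - 1) * v - u)) := by
          congr 1
          ring
      _ = (2 * (1 + 1 / σ) * (c / 2) ^ (-v) * (2:ℝ) ^ ((k - 1) * v))
          * (2:ℝ) ^ ((i : ℝ) * (σ + (k - 1) * v - u)) := by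
          rw [← collect]
          ring
  rw [← hfin]
  exact htotal

lemma aux_core (u v k c σ : ℝ) (hu0 : 0 ≤ u) (hv : 0 < v) (hk1 : 1 < k) (hc0 : 0 < c)
    (hσ0 : 0 < σ) (hσ1 : σ ≤ 1) (hσv : 1 - v ≤ σ) (hσe : σ + (k - 1) * v - u < 0)
    (hδ : ∀ p : ℕ, 1 ≤ p → ∀ m : ℤ, c * (p : ℝ) ^ (1 - k) ≤ |(p : ℝ) * π - (m : ℝ)|) :
    ∃ B : ℝ, 0 ≤ B ∧ ∀ N : ℕ,
      ∑ p ∈ Finset.Ico 1 N, (p : ℝ) ^ (-u) * |dd p| ^ (-v) ≤ B := by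
  obtain ⟨E, hE0, hE⟩ := aux_block u v k c σ hu0 hv hk1 hc0 hσ0 hσ1 hσv hδ
  set F : ℕ → ℝ := fun p => (p : ℝ) ^ (-u) * |dd p| ^ (-v) with hF
  have hF0 : ∀ p, 0 ≤ F p := fun p =>
    mul_nonneg (Real.rpow_nonneg (Nat.cast_nonneg p) _) (Real.rpow_nonneg (abs_nonneg _) _)
  set β := σ + (k - 1) * v - u with hβ
  set r : ℝ := (2:ℝ) ^ β with hr
  have hr0 : 0 < r := Real.rpow_pos_of_pos two_pos β
  have hr1 : r < 1 := by
    rw [hr]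
    exact Real.rpow_lt_one_of_one_lt_of_neg (by norm_num) hσe
  have hpow : ∀ i : ℕ, (2:ℝ) ^ ((i:ℝ) * β) = r ^ i := by
    intro i
    rw [hr, ← Real.rpow_natCast ((2:ℝ) ^ β) i, ← Real.rpow_mul (by norm_num : (0:ℝ) ≤ 2),
      mul_comm]
  have h1r : 0 < 1 - r := by linarith
  have hgeom : ∀ I : ℕ, ∑ i ∈ Finset.range I, r ^ i ≤ 1 / (1 - r) := by
    intro I
    have hge := geom_sum_eq (ne_of_lt hr1) I
    rw [hge]
    have hrI : 0 ≤ r ^ I := le_of_lt (pow_pos hr0 I)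
    rw [show (r ^ I - 1) / (r - 1) = (1 - r ^ I) / (1 - r) by
      rw [div_eq_div_iff (by linarith) (by linarith)]; ring]
    gcongr <;> linarith
  have hdecomp : ∀ I : ℕ, ∑ p ∈ Finset.Ico 1 (2 ^ I), F p
      = ∑ i ∈ Finset.range I, ∑ p ∈ Finset.Ico ((2:ℕ) ^ i) (2 ^ (i + 1)), F p := by
    intro I
    induction I with
    | zero => simp
    | succ n ih =>
      rw [Finset.sum_range_succ, ← ih]
      exact (Finset.sum_Ico_consecutive F Nat.one_le_two_pow
        (Nat.pow_le_pow_right (by norm_num) (Nat.le_succ n))).symm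
  refine ⟨E * (1 / (1 - r)), mul_nonneg hE0 (div_pos one_pos h1r).le, ?_⟩
  intro N
  have h1 : ∑ p ∈ Finset.Ico 1 N, F p ≤ ∑ p ∈ Finset.Ico 1 (2 ^ N), F p := by
    apply Finset.sum_le_sum_of_subset_of_nonneg
    · exact Finset.Ico_subset_Ico le_rfl (Nat.lt_two_pow_self (n := N)).le
    · intro p _ _; exact hF0 p
  have h2 : ∑ p ∈ Finset.Ico 1 (2 ^ N), F p ≤ E * (1 / (1 - r)) := by
    rw [hdecomp N]
    calc ∑ i ∈ Finset.range N, ∑ p ∈ Finset.Ico ((2:ℕ) ^ i) (2 ^ (i + 1)), F p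
        ≤ ∑ i ∈ Finset.range N, E * r ^ i := by
          apply Finset.sum_le_sum
          intro i _
          have := hE i
          rwa [hpow i] at this
      _ = E * ∑ i ∈ Finset.range N, r ^ i := by rw [Finset.mul_sum]
      _ ≤ E * (1 / (1 - r)) := mul_le_mul_of_nonneg_left (hgeom N) hE0
  exact h1.trans h2


lemma aux_dirichlet (hS : {pq : ℕ × ℕ | 0 < pq.1 ∧ 0 < pq.2 ∧ Nat.Coprime pq.1 pq.2 ∧
      |π - (pq.1 : ℝ) / (pq.2 : ℝ)| < 1 / (pq.2 : ℝ) ^ (2:ℝ)}.Finite) : False := by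
  have hinf := Real.infinite_rat_abs_sub_lt_one_div_den_sq_of_irrational irrational_pi
  set Q := {q : ℚ | |π - (q:ℝ)| < 1 / (q.den : ℝ) ^ 2} with hQ
  set S := {pq : ℕ × ℕ | 0 < pq.1 ∧ 0 < pq.2 ∧ Nat.Coprime pq.1 pq.2 ∧
      |π - (pq.1 : ℝ) / (pq.2 : ℝ)| < 1 / (pq.2 : ℝ) ^ (2:ℝ)} with hSdef
  have hnum : ∀ q ∈ Q, 0 < q.num := by
    intro q hq
    rw [hQ, Set.mem_setOf_eq] at hq
    have hden1 : (1:ℝ) ≤ (q.den : ℝ) := by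
      have := q.pos
      exact_mod_cast this
    have hle1 : 1 / (q.den : ℝ) ^ 2 ≤ 1 := by
      rw [div_le_one (by positivity)]
      nlinarith
    have habs : |π - (q:ℝ)| < 1 := lt_of_lt_of_le hq hle1
    have hq2 : (2:ℝ) < (q:ℝ) := by
      have := Real.pi_gt_three
      rw [abs_lt] at habs
      linarith
    have : (0:ℚ) < q := by
      have : (0:ℝ) < (q:ℝ) := by linarith
      exact_mod_cast this
    exact Rat.num_pos.mpr this
  have hmap : ∀ q ∈ Q, (q.num.toNat, q.den) ∈ S := by
    intro q hq
    have hn := hnum q hq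
    rw [hQ, Set.mem_setOf_eq] at hq
    refine ⟨by show 0 < q.num.toNat; omega, q.pos, ?_, ?_⟩
    · have : q.num.toNat = q.num.natAbs := by omega
      rw [this]
      exact q.reduced
    · have hcast : ((q.num.toNat : ℕ) : ℝ) = ((q.num : ℤ) : ℝ) := by
        have : (q.num.toNat : ℤ) = q.num := by omega
        exact_mod_cast this
    
      have hqval : ((q.num.toNat : ℕ) : ℝ) / ((q.den : ℕ) : ℝ) = (q : ℝ) := by
        rw [hcast, Rat.cast_def]
      have hrpow : ((q.den : ℕ) : ℝ) ^ (2:ℝ) = ((q.den : ℕ) : ℝ) ^ (2:ℕ) := by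
        rw [show ((2:ℝ)) = ((2:ℕ):ℝ) by norm_num, Real.rpow_natCast]
      simpa [hqval, hrpow] using hq
  have hinj : Set.InjOn (fun q : ℚ => (q.num.toNat, q.den)) Q := by
    intro q1 h1 q2 h2 heq
    simp only [Prod.mk.injEq] at heq
    have hn1 := hnum q1 h1
    have hn2 := hnum q2 h2
    apply Rat.ext
    · omega
    · exact heq.2
  have : S.Infinite := Set.Infinite.mono (Set.image_subset_iff.mpr hmap) (hinf.image hinj)
  exact this hS


set_option maxHeartbeats 2000000 in
open Real in
theorem series_converges_of_mu_lt (u v : ℝ) (hu : 0 < u) (hv : 0 < v)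
    (hmu : ∀ k : ℝ, 1 + (u - 1) / v < k →
      {pq : ℕ × ℕ | 0 < pq.1 ∧ 0 < pq.2 ∧ Nat.Coprime pq.1 pq.2 ∧
        |π - (pq.1 : ℝ) / (pq.2 : ℝ)| < 1 / (pq.2 : ℝ) ^ k}.Finite) :
    Summable (fun n : ℕ => 1 / ((n : ℝ) ^ u * |Real.sin n| ^ v)) := by
  by_cases hu1 : 1 < u
  swap
  · exfalso
    apply aux_dirichlet
    apply hmu 2
    have hd : (u - 1) / v ≤ 0 := div_nonpos_of_nonpos_of_nonneg (by linarith) hv.le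
    linarith
  -- main case
  set ε : ℝ := 1 / (2 * (v + 1)) with hε
  have hε0 : 0 < ε := by rw [hε]; positivity
  have hεv0 : 0 < v * ε := by positivity
  have hεvv : v * ε < v := by
    rw [hε]
    rw [show v * (1 / (2 * (v + 1))) = v / (2 * (v + 1)) by ring]
    rw [div_lt_iff₀ (by positivity)]
    nlinarith
  have hεv1 : v * ε < 1 := by
    rw [hε, show v * (1 / (2 * (v + 1))) = v / (2 * (v + 1)) by ring,
      div_lt_one (by positivity)]
    linarith
  set k : ℝ := 1 + (u - 1) / v + ε with hk
  have huv : 0 < (u - 1) / v := div_pos (by linarith) hv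
  have hklt : 1 + (u - 1) / v < k := by rw [hk]; linarith
  have hk1 : 1 < k := by rw [hk]; linarith
  have hkv : (k - 1) * v = (u - 1) + v * ε := by
    rw [hk]
    field_simp
    ring
  set S := {pq : ℕ × ℕ | 0 < pq.1 ∧ 0 < pq.2 ∧ Nat.Coprime pq.1 pq.2 ∧
        |π - (pq.1 : ℝ) / (pq.2 : ℝ)| < 1 / (pq.2 : ℝ) ^ k} with hSdef
  have hS : S.Finite := hmu k hklt
  obtain ⟨c₀, hc₀0, hc₀min⟩ := aux_fin_min S hS (fun pq => |π - (pq.1 : ℝ) / (pq.2 : ℝ)|) (by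
    intro pq hpq
    obtain ⟨h1, h2, _, _⟩ := hpq
    rw [abs_pos, sub_ne_zero]
    intro heq
    apply irrational_pi.ne_rat ((pq.1 : ℚ) / (pq.2 : ℚ))
    rw [heq]
    push_cast
    ring)
  set c : ℝ := min c₀ 1 with hc
  have hc0 : 0 < c := lt_min hc₀0 one_pos
  have hc1 : c ≤ 1 := min_le_right _ _
  have hcc0 : c ≤ c₀ := min_le_left _ _
  -- the Liouville-type lower bound
  have hδ : ∀ p : ℕ, 1 ≤ p → ∀ m : ℤ, c * (p : ℝ) ^ (1 - k) ≤ |(p : ℝ) * π - (m : ℝ)| := by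
    intro p hp m
    have hppos : (0:ℝ) < (p:ℝ) := by exact_mod_cast hp
    have hp1 : (1:ℝ) ≤ (p:ℝ) := by exact_mod_cast hp
    have hpk1 : (p:ℝ) ^ (1 - k) ≤ 1 :=
      Real.rpow_le_one_of_one_le_of_nonpos hp1 (by linarith)
    have hpk0 : (0:ℝ) < (p:ℝ) ^ (1 - k) := Real.rpow_pos_of_pos hppos _
    have hcp : c * (p:ℝ) ^ (1 - k) ≤ c := by nlinarith
    rcases le_or_gt m 0 with hm | hm
    · have h2 : (m:ℝ) ≤ 0 := by exact_mod_cast hm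
      have hge : (1:ℝ) ≤ (p:ℝ) * π - (m:ℝ) := by nlinarith [Real.pi_gt_three]
      calc c * (p:ℝ) ^ (1 - k) ≤ 1 := by linarith
        _ ≤ (p:ℝ) * π - (m:ℝ) := hge
        _ ≤ |(p:ℝ) * π - (m:ℝ)| := le_abs_self _
    · set a : ℕ := m.toNat with ha
      have ham : ((a:ℕ):ℝ) = (m:ℝ) := by
        have : ((a:ℕ):ℤ) = m := by omega
        exact_mod_cast this
      have ha1 : 1 ≤ a := by omega
      set d : ℕ := Nat.gcd a p with hd
      have hdpos : 0 < d := Nat.gcd_pos_of_pos_right a (by omega)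
      set a' : ℕ := a / d with ha'
      set p' : ℕ := p / d with hp'
      have hcop : Nat.Coprime a' p' := Nat.coprime_div_gcd_div_gcd hdpos
      have hda : a' * d = a := Nat.div_mul_cancel (Nat.gcd_dvd_left a p)
      have hdp : p' * d = p := Nat.div_mul_cancel (Nat.gcd_dvd_right a p)
      have hp'1 : 1 ≤ p' := by
        rcases Nat.eq_zero_or_pos p' with h | h
        · rw [h] at hdp; omega
        · exact h
      have ha'1 : 1 ≤ a' := by
        rcases Nat.eq_zero_or_pos a' with h | h
        · rw [h] at hda; omega
        · exact h
      have hp'le : p' ≤ p := by rw [← hdp]; exact Nat.le_mul_of_pos_right p' hdpos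
      have hp'pos : (0:ℝ) < (p':ℝ) := by exact_mod_cast hp'1
      have hfrac : (a:ℝ) / (p:ℝ) = (a':ℝ) / (p':ℝ) := by
        have hdne : ((d:ℕ):ℝ) ≠ 0 := by exact_mod_cast hdpos.ne'
        rw [← hda, ← hdp]
        push_cast
        rw [mul_div_mul_right _ _ hdne]
      have habs : |(p:ℝ) * π - (m:ℝ)| = (p:ℝ) * |π - (a':ℝ)/(p':ℝ)| := by
        rw [← hfrac, ← abs_of_pos hppos, ← abs_mul]
        congr 1
        field_simp
        rw [← ham]
        rw [abs_of_pos hppos]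
      rcases Classical.em ((a', p') ∈ S) with hin | hout
      · have hge := hc₀min (a', p') hin
        simp only at hge
        rw [habs]
        calc c * (p:ℝ) ^ (1 - k) ≤ c := hcp
          _ ≤ c₀ := hcc0
          _ = 1 * c₀ := (one_mul _).symm
          _ ≤ (p:ℝ) * |π - (a':ℝ)/(p':ℝ)| := by
              apply mul_le_mul hp1 hge hc₀0.le hppos.le
      · have hge : 1 / (p':ℝ) ^ k ≤ |π - (a':ℝ)/(p':ℝ)| := by
          by_contra hlt
          push_neg at hlt
          exact hout ⟨by omega, by omega, hcop, hlt⟩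
        have h1 : 1 / (p:ℝ) ^ k ≤ 1 / (p':ℝ) ^ k := by
          apply one_div_le_one_div_of_le (Real.rpow_pos_of_pos hp'pos k)
          exact Real.rpow_le_rpow hp'pos.le (by exact_mod_cast hp'le) (by linarith)
        have h2 : (p:ℝ) ^ (1 - k) = (p:ℝ) * (1 / (p:ℝ) ^ k) := by
          rw [Real.rpow_sub hppos, Real.rpow_one]
          ring
        rw [habs]
        calc c * (p:ℝ) ^ (1 - k) ≤ 1 * (p:ℝ) ^ (1 - k) := by nlinarith
          _ = (p:ℝ) * (1 / (p:ℝ) ^ k) := by rw [one_mul, h2]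
          _ ≤ (p:ℝ) * (1 / (p':ℝ) ^ k) := by
              apply mul_le_mul_of_nonneg_left h1 hppos.le
          _ ≤ (p:ℝ) * |π - (a':ℝ)/(p':ℝ)| := by
              apply mul_le_mul_of_nonneg_left hge hppos.le
  -- choose σ
  set σ : ℝ := (max (1 - v) 0 + (1 - v * ε)) / 2 with hσ
  have hmaxl : 1 - v ≤ max (1 - v) 0 := le_max_left _ _
  have hmax0 : 0 ≤ max (1 - v) 0 := le_max_right _ _
  have hmax1 : max (1 - v) 0 ≤ 1 := max_le (by linarith) (by linarith)
  have hσ0 : 0 < σ := by rw [hσ]; linarith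
  have hσ1 : σ ≤ 1 := by rw [hσ]; linarith
  have hσv : 1 - v ≤ σ := by rw [hσ]; linarith
  have hσe : σ + (k - 1) * v - u < 0 := by
    have hlt : max (1 - v) 0 < 1 - v * ε := max_lt (by linarith) (by linarith)
    rw [hσ, hkv]
    linarith
  obtain ⟨B, hB0, hB⟩ := aux_core u v k c σ (by linarith) hv hk1 hc0 hσ0 hσ1 hσv hσe hδ
  -- assembly
  set f : ℕ → ℝ := fun n => 1 / ((n : ℝ) ^ u * |Real.sin n| ^ v) with hf
  have hf0 : ∀ n, 0 ≤ f n := by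
    intro n
    rw [hf]
    positivity
  have hsummu : Summable (fun n : ℕ => 1 / (n : ℝ) ^ u) := by
    simp only [one_div]
    exact Real.summable_nat_rpow_inv.mpr hu1
  set C1 : ℝ := ∑' n : ℕ, 1 / (n : ℝ) ^ u with hC1
  have hC10 : 0 ≤ C1 := tsum_nonneg (fun n => by positivity)
  set C2 : ℝ := (2:ℝ) ^ (-u) * (2 / π) ^ (-v) with hC2
  have hC20 : 0 ≤ C2 := by rw [hC2]; positivity
  set pp : ℕ → ℤ := fun n => round ((n : ℝ) / π) with hpp
  set bad : ℕ → Prop := fun n => |(n : ℝ) - (pp n : ℝ) * π| < 1/2 ∧ 1 ≤ pp n with hbad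
  clear_value bad
  clear_value pp
  have hppa : ∀ n : ℕ, |(n : ℝ) - (pp n : ℝ) * π| ≤ π / 2 := by
    intro n
    have h1 := abs_sub_round ((n : ℝ) / π)
    have heq : (n : ℝ) - (pp n : ℝ) * π = π * ((n : ℝ) / π - round ((n : ℝ) / π)) := by
      simp only [hpp]
      field_simp
    rw [heq, abs_mul, abs_of_pos Real.pi_pos]
    calc π * |(n : ℝ) / π - (round ((n : ℝ) / π) : ℝ)| ≤ π * (1/2) := by
          apply mul_le_mul_of_nonneg_left h1 Real.pi_pos.le
      _ = π / 2 := by ring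
  -- good bound
  have hgood : ∀ n : ℕ, ¬ bad n → f n ≤ π ^ v * (1 / (n : ℝ) ^ u) := by
    intro n hb
    rcases Nat.eq_zero_or_pos n with h0 | h0
    · subst h0
      simp only [hf, Nat.cast_zero, Real.zero_rpow (ne_of_gt hu), zero_mul, div_zero]
      positivity
    · have hn1 : (1:ℝ) ≤ (n : ℝ) := by exact_mod_cast h0
      have hhalf : 1/2 ≤ |(n : ℝ) - (pp n : ℝ) * π| := by
        by_contra hcon
        push_neg at hcon
        apply hb
        simp only [hbad]
        refine ⟨hcon, ?_⟩
        by_contra hp0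
        push_neg at hp0
        have hple : (pp n : ℝ) ≤ 0 := by
          have h9 : pp n ≤ 0 := by omega
          exact Int.cast_nonpos.mpr h9
        have : (1:ℝ) ≤ (n : ℝ) - (pp n : ℝ) * π := by nlinarith [Real.pi_pos]
        have := le_abs_self ((n : ℝ) - (pp n : ℝ) * π)
        linarith
      have hsin : 1 / π ≤ |Real.sin (n : ℝ)| := by
        have := aux_sin (n : ℝ) (pp n) (hppa n)
        have h2pi : 0 < 2 / π := by positivity
        calc 1 / π = 2 / π * (1/2) := by ring
          _ ≤ 2 / π * |(n : ℝ) - (pp n : ℝ) * π| := by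
              apply mul_le_mul_of_nonneg_left hhalf h2pi.le
          _ ≤ |Real.sin (n : ℝ)| := this
      have hnu : (0:ℝ) < (n : ℝ) ^ u := Real.rpow_pos_of_pos (by linarith) u
      have hsv : (1 / π) ^ v ≤ |Real.sin (n : ℝ)| ^ v :=
        Real.rpow_le_rpow (by positivity) hsin hv.le
      have hsv0 : (0:ℝ) < (1 / π) ^ v := Real.rpow_pos_of_pos (by positivity) v
      have hle : 1 / ((n : ℝ) ^ u * |Real.sin (n : ℝ)| ^ v)
          ≤ 1 / ((n : ℝ) ^ u * (1 / π) ^ v) := by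
        apply one_div_le_one_div_of_le (by positivity)
        apply mul_le_mul_of_nonneg_left hsv hnu.le
      have heq2 : 1 / ((n : ℝ) ^ u * (1 / π) ^ v) = π ^ v * (1 / (n : ℝ) ^ u) := by
        rw [one_div ((n : ℝ) ^ u * (1 / π) ^ v), one_div π, Real.inv_rpow Real.pi_pos.le]
        rw [mul_inv, inv_inv, one_div]
        ring
      rw [hf]
      simp only
      rw [← heq2]
      exact hle
  -- bad facts
  have hbadf : ∀ n : ℕ, bad n → 1 ≤ (pp n).toNat ∧ (pp n).toNat ≤ n ∧
      ((n : ℤ) = round (((pp n).toNat : ℝ) * π)) ∧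
      f n ≤ C2 * (((pp n).toNat : ℝ) ^ (-u) * |dd (pp n).toNat| ^ (-v)) := by
    intro n hb
    simp only [hbad] at hb
    obtain ⟨hb1, hb2⟩ := hb
    set q : ℕ := (pp n).toNat with hq
    have hqcast : ((q : ℕ) : ℝ) = ((pp n : ℤ) : ℝ) := by
      have : ((q : ℕ) : ℤ) = pp n := by omega
      exact_mod_cast this
    have hq1 : 1 ≤ q := by omega
    have hq1R : (1:ℝ) ≤ (q : ℝ) := by exact_mod_cast hq1
    have h2q : 2 * (q : ℝ) ≤ (n : ℝ) := by
      rw [abs_lt] at hb1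
      rw [hqcast] at *
      nlinarith [Real.pi_gt_three]
    have hqn : q ≤ n := by
      have : (q:ℝ) ≤ (n:ℝ) := by linarith
      exact_mod_cast this
    have hround : round ((q : ℝ) * π) = (n : ℤ) := by
      have hr1 : |(q : ℝ) * π - (round ((q : ℝ) * π) : ℝ)| ≤ 1/2 := abs_sub_round _
      have hr2 : |(q : ℝ) * π - (n : ℝ)| < 1/2 := by
        rw [abs_sub_comm]
        rw [hqcast]
        exact hb1
      have habs3 : |((round ((q : ℝ) * π) - (n : ℤ) : ℤ) : ℝ)| < 1 := by
        push_cast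
        calc |(round ((q : ℝ) * π) : ℝ) - (n : ℝ)|
            ≤ |(round ((q : ℝ) * π) : ℝ) - (q : ℝ) * π| + |(q : ℝ) * π - (n : ℝ)| :=
              abs_sub_le _ _ _
          _ < 1 := by
              rw [abs_sub_comm] at hr1
              linarith
        
      have : round ((q : ℝ) * π) - (n : ℤ) = 0 := by
        have h4 : |round ((q : ℝ) * π) - (n : ℤ)| < 1 := by
          exact_mod_cast habs3
        rw [abs_lt] at h4
        omega
      exact sub_eq_zero.mp this
    have hdq : dd q = (q : ℝ) * π - (n : ℝ) := by
      rw [dd, hround]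
      push_cast
      ring
    have hddlt : |dd q| < 1/2 := by
      rw [hdq, abs_sub_comm, hqcast]
      exact hb1
    have hdd0 : 0 < |dd q| := by
      have := hδ q hq1 (round ((q : ℝ) * π))
      have hcp : (0:ℝ) < c * (q:ℝ) ^ (1 - k) := by positivity
      calc (0:ℝ) < c * (q:ℝ) ^ (1 - k) := hcp
        _ ≤ |(q : ℝ) * π - ((round ((q : ℝ) * π) : ℤ) : ℝ)| := this
        _ = |dd q| := by rw [dd]
    have hsinb : 2 / π * |dd q| ≤ |Real.sin (n : ℝ)| := by
      have := aux_sin (n : ℝ) (pp n) (hppa n)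
      have heq3 : |(n : ℝ) - (pp n : ℝ) * π| = |dd q| := by
        rw [hdq, ← hqcast, abs_sub_comm]
      rwa [heq3] at this
    refine ⟨hq1, hqn, hround.symm, ?_⟩
    have hn0 : (0:ℝ) < (n:ℝ) := by linarith
    have hnu : (0:ℝ) < (n : ℝ) ^ u := Real.rpow_pos_of_pos hn0 u
    have hsd : (0:ℝ) < 2 / π * |dd q| := by positivity
    have hstep : 1 / ((n : ℝ) ^ u * |Real.sin (n : ℝ)| ^ v)
        ≤ 1 / ((2 * (q:ℝ)) ^ u * (2 / π * |dd q|) ^ v) := by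
      apply one_div_le_one_div_of_le (by positivity)
      apply mul_le_mul
      · exact Real.rpow_le_rpow (by positivity) h2q hu.le
      · exact Real.rpow_le_rpow hsd.le hsinb hv.le
      · positivity
      · positivity
    have heq4 : 1 / ((2 * (q:ℝ)) ^ u * (2 / π * |dd q|) ^ v)
        = C2 * ((q : ℝ) ^ (-u) * |dd q| ^ (-v)) := by
      rw [hC2, Real.mul_rpow (by norm_num) (by positivity),
        Real.mul_rpow (by positivity) (abs_nonneg _),
        Real.rpow_neg (by norm_num), Real.rpow_neg (by positivity),
        Real.rpow_neg (by positivity), Real.rpow_neg (abs_nonneg _)]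
      field_simp
    rw [hf]
    simp only
    rw [← heq4]
    exact hstep
  -- sum it all up
  apply summable_of_sum_range_le hf0 (c := C2 * B + π ^ v * C1)
  intro N
  classical
  have hsplitN := Finset.sum_filter_add_sum_filter_not (Finset.range N) bad f
  have hgoodsum : ∑ n ∈ (Finset.range N).filter (fun n => ¬ bad n), f n ≤ π ^ v * C1 := by
    calc ∑ n ∈ (Finset.range N).filter (fun n => ¬ bad n), f n
        ≤ ∑ n ∈ (Finset.range N).filter (fun n => ¬ bad n), π ^ v * (1 / (n : ℝ) ^ u) := by
          apply Finset.sum_le_sum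
          intro n hn
          rw [Finset.mem_filter] at hn
          exact hgood n hn.2
      _ ≤ ∑ n ∈ Finset.range N, π ^ v * (1 / (n : ℝ) ^ u) := by
          apply Finset.sum_le_sum_of_subset_of_nonneg (Finset.filter_subset _ _)
          intro n _ _
          positivity
      _ = π ^ v * ∑ n ∈ Finset.range N, (1 / (n : ℝ) ^ u) := by rw [Finset.mul_sum]
      _ ≤ π ^ v * C1 := by
          apply mul_le_mul_of_nonneg_left ?_ (by positivity)
          exact Summable.sum_le_tsum _ (fun n _ => by positivity) hsummu
  have hbadsum : ∑ n ∈ (Finset.range N).filter bad, f n ≤ C2 * B := by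
    set badset := (Finset.range N).filter bad with hbs
    set G : ℕ → ℝ := fun q => (q : ℝ) ^ (-u) * |dd q| ^ (-v) with hG
    have hG0 : ∀ q, 0 ≤ G q := fun q =>
      mul_nonneg (Real.rpow_nonneg (Nat.cast_nonneg q) _) (Real.rpow_nonneg (abs_nonneg _) _)
    set pfun : ℕ → ℕ := fun n => (pp n).toNat with hpfun
    have hinj2 : ∀ n1 ∈ badset, ∀ n2 ∈ badset, pfun n1 = pfun n2 → n1 = n2 := by
      intro n1 h1 n2 h2 heq
      rw [hbs, Finset.mem_filter] at h1 h2
      have e1 := (hbadf n1 h1.2).2.2.1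
      have e2 := (hbadf n2 h2.2).2.2.1
      have heq' : (pp n1).toNat = (pp n2).toNat := heq
      rw [heq'] at e1
      omega
    have himgsub : badset.image pfun ⊆ Finset.Ico 1 N := by
      intro j hj
      rw [Finset.mem_image] at hj
      obtain ⟨n, hn, hjeq⟩ := hj
      rw [hbs, Finset.mem_filter, Finset.mem_range] at hn
      obtain ⟨e1, e2, _, _⟩ := hbadf n hn.2
      rw [Finset.mem_Ico, ← hjeq]
      exact ⟨e1, lt_of_le_of_lt e2 hn.1⟩
    calc ∑ n ∈ badset, f n ≤ ∑ n ∈ badset, C2 * G (pfun n) := by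
          apply Finset.sum_le_sum
          intro n hn
          rw [hbs, Finset.mem_filter] at hn
          exact (hbadf n hn.2).2.2.2
      _ = C2 * ∑ n ∈ badset, G (pfun n) := by rw [Finset.mul_sum]
      _ = C2 * ∑ j ∈ badset.image pfun, G j := by rw [Finset.sum_image hinj2]
      _ ≤ C2 * ∑ j ∈ Finset.Ico 1 N, G j := by
          apply mul_le_mul_of_nonneg_left ?_ hC20
          apply Finset.sum_le_sum_of_subset_of_nonneg himgsub
          intro j _ _
          exact hG0 j
      _ ≤ C2 * B := mul_le_mul_of_nonneg_left (hB N) hC20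
  calc ∑ n ∈ Finset.range N, f n
      = ∑ n ∈ (Finset.range N).filter bad, f n
        + ∑ n ∈ (Finset.range N).filter (fun n => ¬ bad n), f n := hsplitN.symm
    _ ≤ C2 * B + π ^ v * C1 := add_le_add hbadsum hgoodsum
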